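/- arXiv:cs/9905010 — 2 statements merged into one kernel-verified Lean document; each statement's English description precedes it below -/
import Mathlib

section
/- Under the stated setup, for every λ ∈ ℝ^n with Z_λ finite and every direction γ ∈ ℝ^n, assuming that for some ε > 0 both Z_{λ+tγ} is finite for all |t| < ε and termwise differentiation of all the relevant series at t = 0 is justified by a summable dominating function on (−ε, ε), the functions t ↦ A(tγ, λ) and t ↦ L(λ + tγ) are differentiable at t = 0 and their derivatives at t = 0 coincide; both equal ∑_{y∈𝒴} (k_λ[γ·ν] − p_λ[γ·ν]). -/
/- Common setup: log-linear models over proof trees (complete data X) and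
   queries (incomplete data Y). -/

variable {X Y : Type*}

/-- `ν_#(x) = ∑ i, ν_i(x)`. -/
def nuSharp {n : ℕ} (ν : Fin n → X → ℕ) (x : X) : ℕ := ∑ i, ν i x

/-- weighted property sum `λ·ν(x)`. -/
noncomputable def wdot {n : ℕ} (l : Fin n → ℝ) (ν : Fin n → X → ℕ) (x : X) : ℝ :=
  ∑ i, l i * (ν i x : ℝ)

/-- normalizing constant `Z_λ`. -/
noncomputable def Zpart (p0 : X → ℝ) {n : ℕ} (ν : Fin n → X → ℕ) (l : Fin n → ℝ) : ℝ :=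
  ∑' x : X, Real.exp (wdot l ν x) * p0 x

/-- log-linear distribution `p_λ(x)`. -/
noncomputable def pLL (p0 : X → ℝ) {n : ℕ} (ν : Fin n → X → ℕ) (l : Fin n → ℝ) (x : X) : ℝ :=
  (Zpart p0 ν l)⁻¹ * Real.exp (wdot l ν x) * p0 x

/-- incomplete-data probability `p_λ(y) = ∑_{x ∈ X(y)} p_λ(x)`. -/
noncomputable def pLLY (Yf : X → Y) (p0 : X → ℝ) {n : ℕ} (ν : Fin n → X → ℕ)
    (l : Fin n → ℝ) (y : Y) : ℝ :=
  ∑' x : {x : X // Yf x = y}, pLL p0 ν l x.1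

/-- incomplete-data log-likelihood `L(λ) = ∑_{y ∈ 𝒴} ln p_λ(y)`. -/
noncomputable def LL (Yf : X → Y) (p0 : X → ℝ) {n : ℕ} (ν : Fin n → X → ℕ)
    (𝒴 : Multiset Y) (l : Fin n → ℝ) : ℝ :=
  (𝒴.map fun y => Real.log (pLLY Yf p0 ν l y)).sum

/-- expectation `p_λ[f]`. -/
noncomputable def pExp (p0 : X → ℝ) {n : ℕ} (ν : Fin n → X → ℕ) (l : Fin n → ℝ)
    (f : X → ℝ) : ℝ :=
  ∑' x : X, pLL p0 ν l x * f x

/-- conditional expectation `k_λ[f]` given observed `y`. -/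
noncomputable def kExp (Yf : X → Y) (p0 : X → ℝ) {n : ℕ} (ν : Fin n → X → ℕ)
    (l : Fin n → ℝ) (y : Y) (f : X → ℝ) : ℝ :=
  ∑' x : {x : X // Yf x = y}, (pLL p0 ν l x.1 / pLLY Yf p0 ν l y) * f x.1

/-- auxiliary function
`A(γ,λ) = ∑_{y∈𝒴} (1 + k_λ[γ·ν] − p_λ[∑ i, ν̄_i e^{γ_i ν_#}])`. -/
noncomputable def Aaux (Yf : X → Y) (p0 : X → ℝ) {n : ℕ} (ν : Fin n → X → ℕ)
    (𝒴 : Multiset Y) (γ l : Fin n → ℝ) : ℝ :=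
  (𝒴.map fun y =>
    1 + kExp Yf p0 ν l y (fun x => wdot γ ν x)
      - pExp p0 ν l (fun x =>
          ∑ i, ((ν i x : ℝ) / (nuSharp ν x : ℝ)) * Real.exp (γ i * (nuSharp ν x : ℝ)))).sum

section Aux

private lemma multiset_hasDerivAt {α : Type*} (s : Multiset α) (h : α → ℝ → ℝ) (d : α → ℝ)
    (t0 : ℝ) (H : ∀ a ∈ s, HasDerivAt (h a) (d a) t0) :
    HasDerivAt (fun t => (s.map fun a => h a t).sum) ((s.map d).sum) t0 := by
  induction s using Multiset.induction_on with
  | empty => simpa using hasDerivAt_const t0 (0 : ℝ)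
  | cons a s ih =>
    simp only [Multiset.map_cons, Multiset.sum_cons]
    exact (H a (Multiset.mem_cons_self a s)).add
      (ih fun b hb => H b (Multiset.mem_cons_of_mem hb))

private lemma wdot_smul' {X : Type*} {n : ℕ} (t : ℝ) (γ : Fin n → ℝ) (ν : Fin n → X → ℕ)
    (x : X) : wdot (t • γ) ν x = t * wdot γ ν x := by
  simp [wdot, Finset.mul_sum, mul_assoc]

private lemma wdot_add' {X : Type*} {n : ℕ} (l γ : Fin n → ℝ) (t : ℝ) (ν : Fin n → X → ℕ)
    (x : X) : wdot (l + t • γ) ν x = wdot l ν x + t * wdot γ ν x := by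
  simp [wdot, Finset.mul_sum, ← Finset.sum_add_distrib, add_mul, mul_assoc]

private lemma kExp_smul' {X Y : Type*} (Yf : X → Y) (p0 : X → ℝ) {n : ℕ} (ν : Fin n → X → ℕ)
    (l γ : Fin n → ℝ) (y : Y) (t : ℝ) :
    kExp Yf p0 ν l y (fun x => wdot (t • γ) ν x)
      = t * kExp Yf p0 ν l y (fun x => wdot γ ν x) := by
  unfold kExp
  rw [← tsum_mul_left]
  exact tsum_congr fun x => by simp only [wdot_smul']; ring

/-- derivative of the `pExp` part of `A(tγ,λ)` at `t = 0`. -/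
private lemma pexp_term_deriv {X : Type*} (p0 : X → ℝ) {n : ℕ} (ν : Fin n → X → ℕ)
    (hν : ∀ x, 1 ≤ nuSharp ν x) (l γ : Fin n → ℝ) (ε : ℝ) (hε : 0 < ε)
    (g2 : X → ℝ) (hg2sum : Summable g2)
    (hg2 : ∀ (x : X) (t : ℝ), |t| < ε →
      |pLL p0 ν l x * ∑ i, ((ν i x : ℝ) / (nuSharp ν x : ℝ)) * (γ i * (nuSharp ν x : ℝ)) *
        Real.exp (t * γ i * (nuSharp ν x : ℝ))| ≤ g2 x)
    (hpsum : ∀ t : ℝ, |t| < ε → Summable fun x : X => pLL p0 ν l x *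
      ∑ i, ((ν i x : ℝ) / (nuSharp ν x : ℝ)) * Real.exp (t * γ i * (nuSharp ν x : ℝ))) :
    HasDerivAt (fun t : ℝ => ∑' x : X, pLL p0 ν l x *
        ∑ i, ((ν i x : ℝ) / (nuSharp ν x : ℝ)) * Real.exp (t * γ i * (nuSharp ν x : ℝ)))
      (pExp p0 ν l (fun x => wdot γ ν x)) 0 := by
  have hmem0 : (0:ℝ) ∈ Set.Ioo (-ε) ε := ⟨by linarith, hε⟩
  have hder : ∀ (x : X) (t : ℝ), HasDerivAt
      (fun t : ℝ => pLL p0 ν l x *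
        ∑ i, ((ν i x : ℝ) / (nuSharp ν x : ℝ)) * Real.exp (t * γ i * (nuSharp ν x : ℝ)))
      (pLL p0 ν l x * ∑ i, ((ν i x : ℝ) / (nuSharp ν x : ℝ)) * (γ i * (nuSharp ν x : ℝ)) *
        Real.exp (t * γ i * (nuSharp ν x : ℝ))) t := by
    intro x t
    have h : ∀ i : Fin n, HasDerivAt
        (fun t : ℝ => ((ν i x : ℝ) / (nuSharp ν x : ℝ)) * Real.exp (t * γ i * (nuSharp ν x : ℝ)))
        (((ν i x : ℝ) / (nuSharp ν x : ℝ)) * (γ i * (nuSharp ν x : ℝ)) *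
          Real.exp (t * γ i * (nuSharp ν x : ℝ))) t := by
      intro i
      have h2 : HasDerivAt (fun t : ℝ => t * γ i * (nuSharp ν x : ℝ))
          (γ i * (nuSharp ν x : ℝ)) t := by
        simpa [mul_assoc] using hasDerivAt_mul_const (γ i * (nuSharp ν x : ℝ))
      have h3 := (h2.exp).const_mul ((ν i x : ℝ) / (nuSharp ν x : ℝ))
      exact h3.congr_deriv (by ring)
    have h4 := (HasDerivAt.fun_sum (fun i (_ : i ∈ Finset.univ) => h i)).const_mul (pLL p0 ν l x)
    exact h4
  have H : HasDerivAt (fun t : ℝ => ∑' x : X, pLL p0 ν l x *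
        ∑ i, ((ν i x : ℝ) / (nuSharp ν x : ℝ)) * Real.exp (t * γ i * (nuSharp ν x : ℝ)))
      (∑' x : X, pLL p0 ν l x *
        ∑ i, ((ν i x : ℝ) / (nuSharp ν x : ℝ)) * (γ i * (nuSharp ν x : ℝ)) *
          Real.exp ((0:ℝ) * γ i * (nuSharp ν x : ℝ))) 0 :=
    hasDerivAt_tsum_of_isPreconnected hg2sum (isOpen_Ioo (a := -ε) (b := ε))
      isPreconnected_Ioo (fun x t _ => hder x t)
      (fun x t ht => by
        rw [Real.norm_eq_abs]; exact hg2 x t (abs_lt.2 ⟨ht.1, ht.2⟩))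
      hmem0 (hpsum 0 (by simpa using hε)) hmem0
  have hval : (∑' x : X, pLL p0 ν l x *
        ∑ i, ((ν i x : ℝ) / (nuSharp ν x : ℝ)) * (γ i * (nuSharp ν x : ℝ)) *
          Real.exp ((0:ℝ) * γ i * (nuSharp ν x : ℝ)))
      = pExp p0 ν l (fun x => wdot γ ν x) := by
    unfold pExp
    apply tsum_congr
    intro x
    congr 1
    simp only [zero_mul, Real.exp_zero, mul_one]
    rw [wdot]
    apply Finset.sum_congr rfl
    intro i _
    have hs : (nuSharp ν x : ℝ) ≠ 0 := by
      have := hν x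
      positivity
    field_simp
  rw [← hval]
  exact H

/-- derivative of a single log-likelihood term along `l + tγ` at `t = 0`. -/
private lemma logLik_term_deriv {X Y : Type*} (Yf : X → Y) (p0 : X → ℝ) (hp0 : ∀ x, 0 < p0 x)
    {n : ℕ} (ν : Fin n → X → ℕ) (l γ : Fin n → ℝ) (ε : ℝ) (hε : 0 < ε)
    (hZt : ∀ t : ℝ, |t| < ε → Summable fun x : X => Real.exp (wdot (l + t • γ) ν x) * p0 x)
    (g1 : X → ℝ) (hg1sum : Summable g1)
    (hg1 : ∀ (x : X) (t : ℝ), |t| < ε →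
      |wdot γ ν x| * Real.exp (wdot (l + t • γ) ν x) * p0 x ≤ g1 x)
    (y : Y) (hy : 0 < pLLY Yf p0 ν l y) :
    HasDerivAt (fun t : ℝ => Real.log (pLLY Yf p0 ν (l + t • γ) y))
      (kExp Yf p0 ν l y (fun x => wdot γ ν x) - pExp p0 ν l (fun x => wdot γ ν x)) 0 := by
  have hmem0 : (0:ℝ) ∈ Set.Ioo (-ε) ε := ⟨by linarith, hε⟩
  have h0γ : l + (0:ℝ) • γ = l := by simp
  have habs : ∀ t ∈ Set.Ioo (-ε) ε, |t| < ε := fun t ht => abs_lt.2 ⟨ht.1, ht.2⟩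
  -- the fiber over `y` is nonempty
  have hfib : Nonempty {x : X // Yf x = y} := by
    by_contra h
    rw [not_nonempty_iff] at h
    unfold pLLY at hy
    rw [tsum_empty] at hy
    exact lt_irrefl 0 hy
  obtain ⟨x₀⟩ := hfib
  -- summability over the fiber
  have hNsum : ∀ t : ℝ, |t| < ε → Summable (fun x : {x : X // Yf x = y} =>
      Real.exp (wdot (l + t • γ) ν x.1) * p0 x.1) := fun t ht =>
    (hZt t ht).comp_injective Subtype.coe_injective
  -- positivity of the two sums
  have hZpos : ∀ t : ℝ, |t| < ε →
      0 < ∑' x : X, Real.exp (wdot (l + t • γ) ν x) * p0 x := fun t ht =>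
    Summable.tsum_pos (hZt t ht) (fun x => (mul_pos (Real.exp_pos _) (hp0 x)).le) x₀.1
      (mul_pos (Real.exp_pos _) (hp0 x₀.1))
  have hNpos : ∀ t : ℝ, |t| < ε →
      0 < ∑' x : {x : X // Yf x = y}, Real.exp (wdot (l + t • γ) ν x.1) * p0 x.1 := fun t ht =>
    Summable.tsum_pos (hNsum t ht) (fun x => (mul_pos (Real.exp_pos _) (hp0 x.1)).le) x₀
      (mul_pos (Real.exp_pos _) (hp0 x₀.1))
  -- factorization of pLLY
  have hpY : ∀ t : ℝ, pLLY Yf p0 ν (l + t • γ) y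
      = (∑' x : X, Real.exp (wdot (l + t • γ) ν x) * p0 x)⁻¹
        * ∑' x : {x : X // Yf x = y}, Real.exp (wdot (l + t • γ) ν x.1) * p0 x.1 := by
    intro t
    unfold pLLY pLL Zpart
    rw [← tsum_mul_left]
    exact tsum_congr fun x => mul_assoc _ _ _
  -- pointwise derivatives
  have hφder : ∀ (x : X) (t : ℝ),
      HasDerivAt (fun t : ℝ => Real.exp (wdot l ν x + t * wdot γ ν x) * p0 x)
        (wdot γ ν x * (Real.exp (wdot l ν x + t * wdot γ ν x) * p0 x)) t := by
    intro x t
    have h : HasDerivAt (fun s : ℝ => Real.exp (wdot l ν x + s * wdot γ ν x) * p0 x)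
        (Real.exp (wdot l ν x + t * wdot γ ν x) * wdot γ ν x * p0 x) t :=
      (((hasDerivAt_mul_const (wdot γ ν x)).const_add (wdot l ν x)).exp).mul_const (p0 x)
    convert h using 1
    ring
  have hbound : ∀ (x : X), ∀ t ∈ Set.Ioo (-ε) ε,
      ‖wdot γ ν x * (Real.exp (wdot l ν x + t * wdot γ ν x) * p0 x)‖ ≤ g1 x := by
    intro x t ht
    have h1 := hg1 x t (habs t ht)
    rw [wdot_add'] at h1
    calc ‖wdot γ ν x * (Real.exp (wdot l ν x + t * wdot γ ν x) * p0 x)‖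
        = |wdot γ ν x| * Real.exp (wdot l ν x + t * wdot γ ν x) * p0 x := by
          rw [Real.norm_eq_abs, abs_mul,
            abs_of_nonneg (mul_pos (Real.exp_pos _) (hp0 x)).le, ← mul_assoc]
      _ ≤ g1 x := h1
  have hZsum' : ∀ t ∈ Set.Ioo (-ε) ε,
      Summable fun x : X => Real.exp (wdot l ν x + t * wdot γ ν x) * p0 x := fun t ht =>
    (summable_congr fun x => by rw [wdot_add']).1 (hZt t (habs t ht))
  have hg1sub : Summable fun x : {x : X // Yf x = y} => g1 x.1 :=
    hg1sum.comp_injective Subtype.coe_injective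
  -- derivative of the `Z` series
  have hZder : HasDerivAt (fun t : ℝ => ∑' x : X, Real.exp (wdot l ν x + t * wdot γ ν x) * p0 x)
      (∑' x : X, wdot γ ν x * (Real.exp (wdot l ν x + (0:ℝ) * wdot γ ν x) * p0 x)) 0 :=
    hasDerivAt_tsum_of_isPreconnected hg1sum (isOpen_Ioo (a := -ε) (b := ε))
      isPreconnected_Ioo (fun x t _ => hφder x t) hbound hmem0 (hZsum' 0 hmem0) hmem0
  -- derivative of the `N` series
  have hNder : HasDerivAt (fun t : ℝ => ∑' x : {x : X // Yf x = y},
        Real.exp (wdot l ν x.1 + t * wdot γ ν x.1) * p0 x.1)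
      (∑' x : {x : X // Yf x = y},
        wdot γ ν x.1 * (Real.exp (wdot l ν x.1 + (0:ℝ) * wdot γ ν x.1) * p0 x.1)) 0 :=
    hasDerivAt_tsum_of_isPreconnected hg1sub (isOpen_Ioo (a := -ε) (b := ε))
      isPreconnected_Ioo (fun x t _ => hφder x.1 t) (fun x t ht => hbound x.1 t ht) hmem0
      ((hZsum' 0 hmem0).comp_injective Subtype.coe_injective) hmem0
  simp only [zero_mul, add_zero] at hZder hNder
  -- values at 0
  have hZ0pos : (0:ℝ) < ∑' x : X, Real.exp (wdot l ν x) * p0 x := by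
    have h := hZpos 0 (by simpa using hε)
    rw [h0γ] at h
    exact h
  have hN0pos : (0:ℝ) < ∑' x : {x : X // Yf x = y}, Real.exp (wdot l ν x.1) * p0 x.1 := by
    have h := hNpos 0 (by simpa using hε)
    rw [h0γ] at h
    exact h
  have hZ0ne : (fun t : ℝ => ∑' x : X, Real.exp (wdot l ν x + t * wdot γ ν x) * p0 x) 0 ≠ 0 := by
    simpa using hZ0pos.ne'
  have hN0ne : (fun t : ℝ => ∑' x : {x : X // Yf x = y},
      Real.exp (wdot l ν x.1 + t * wdot γ ν x.1) * p0 x.1) 0 ≠ 0 := by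
    simpa using hN0pos.ne'
  have hlog := (hNder.log hN0ne).sub (hZder.log hZ0ne)
  -- eventual equality with log pLLY
  have hev : (fun t : ℝ => Real.log (pLLY Yf p0 ν (l + t • γ) y))
      =ᶠ[nhds (0:ℝ)] fun t =>
        Real.log (∑' x : {x : X // Yf x = y},
          Real.exp (wdot l ν x.1 + t * wdot γ ν x.1) * p0 x.1)
        - Real.log (∑' x : X, Real.exp (wdot l ν x + t * wdot γ ν x) * p0 x) := by
    filter_upwards [Ioo_mem_nhds (neg_lt_zero.2 hε) hε] with t ht
    have e1 : (∑' x : {x : X // Yf x = y},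
        Real.exp (wdot l ν x.1 + t * wdot γ ν x.1) * p0 x.1)
        = ∑' x : {x : X // Yf x = y}, Real.exp (wdot (l + t • γ) ν x.1) * p0 x.1 :=
      tsum_congr fun x => by rw [wdot_add']
    have e2 : (∑' x : X, Real.exp (wdot l ν x + t * wdot γ ν x) * p0 x)
        = ∑' x : X, Real.exp (wdot (l + t • γ) ν x) * p0 x :=
      tsum_congr fun x => by rw [wdot_add']
    rw [e1, e2, hpY t, Real.log_mul (inv_ne_zero (hZpos t (habs t ht)).ne')
      (hNpos t (habs t ht)).ne', Real.log_inv]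
    ring
  have hfinal := hlog.congr_of_eventuallyEq hev
  -- identify the value of the derivative
  have hZeq : Zpart p0 ν l = ∑' x : X, Real.exp (wdot l ν x) * p0 x := rfl
  have hZne : Zpart p0 ν l ≠ 0 := by rw [hZeq]; exact hZ0pos.ne'
  have hNne : (∑' x : {x : X // Yf x = y}, Real.exp (wdot l ν x.1) * p0 x.1) ≠ 0 := hN0pos.ne'
  have hpYl : pLLY Yf p0 ν l y = (Zpart p0 ν l)⁻¹
      * ∑' x : {x : X // Yf x = y}, Real.exp (wdot l ν x.1) * p0 x.1 := by
    have h := hpY 0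
    rw [h0γ] at h
    rw [h, hZeq]
  have hkeq : kExp Yf p0 ν l y (fun x => wdot γ ν x)
      = (∑' x : {x : X // Yf x = y}, wdot γ ν x.1 * (Real.exp (wdot l ν x.1) * p0 x.1))
        / (∑' x : {x : X // Yf x = y}, Real.exp (wdot l ν x.1) * p0 x.1) := by
    rw [div_eq_inv_mul, ← tsum_mul_left]
    unfold kExp
    apply tsum_congr
    intro x
    rw [pLL, hpYl]
    field_simp
  have hpeq : pExp p0 ν l (fun x => wdot γ ν x)
      = (∑' x : X, wdot γ ν x * (Real.exp (wdot l ν x) * p0 x))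
        / (∑' x : X, Real.exp (wdot l ν x) * p0 x) := by
    rw [← hZeq, div_eq_inv_mul, ← tsum_mul_left]
    unfold pExp
    apply tsum_congr
    intro x
    rw [pLL]
    ring
  refine hfinal.congr_deriv ?_
  simp only [zero_mul, add_zero]
  rw [hkeq, hpeq]

end Aux

/-- Lemma 3: the directional derivatives of `A(·,λ)` at `0` and of `L` at `λ`
exist and coincide, both being `∑_{y∈𝒴} (k_λ[γ·ν] − p_λ[γ·ν])`. -/
theorem auxiliary_likelihood_derivatives_agree
    {X Y : Type*} [Countable X] (Yf : X → Y)
    (p0 : X → ℝ) (hp0 : ∀ x, 0 < p0 x) (hp0sum : ∑' x : X, p0 x = 1)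
    {n : ℕ} (ν : Fin n → X → ℕ) (hν : ∀ x, 1 ≤ nuSharp ν x)
    (𝒴 : Multiset Y) (l γ : Fin n → ℝ)
    (hZl : Summable fun x : X => Real.exp (wdot l ν x) * p0 x)
    (hpos : ∀ y ∈ 𝒴, 0 < pLLY Yf p0 ν l y)
    (ε : ℝ) (hε : 0 < ε)
    (hZt : ∀ t : ℝ, |t| < ε → Summable fun x : X => Real.exp (wdot (l + t • γ) ν x) * p0 x)
    (hdom1 : ∃ g : X → ℝ, Summable g ∧ ∀ (x : X) (t : ℝ), |t| < ε →
      |wdot γ ν x| * Real.exp (wdot (l + t • γ) ν x) * p0 x ≤ g x)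
    (hdom2 : ∃ g : X → ℝ, Summable g ∧ ∀ (x : X) (t : ℝ), |t| < ε →
      |pLL p0 ν l x * ∑ i, ((ν i x : ℝ) / (nuSharp ν x : ℝ)) * (γ i * (nuSharp ν x : ℝ)) *
        Real.exp (t * γ i * (nuSharp ν x : ℝ))| ≤ g x)
    (hksum : ∀ y ∈ 𝒴, Summable fun x : {x : X // Yf x = y} =>
      (pLL p0 ν l x.1 / pLLY Yf p0 ν l y) * wdot γ ν x.1)
    (hpsum : ∀ t : ℝ, |t| < ε → Summable fun x : X => pLL p0 ν l x *
      ∑ i, ((ν i x : ℝ) / (nuSharp ν x : ℝ)) * Real.exp (t * γ i * (nuSharp ν x : ℝ))) :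
    HasDerivAt (fun t : ℝ => Aaux Yf p0 ν 𝒴 (t • γ) l)
      ((𝒴.map fun y => kExp Yf p0 ν l y (fun x => wdot γ ν x)
        - pExp p0 ν l (fun x => wdot γ ν x)).sum) 0 ∧
    HasDerivAt (fun t : ℝ => LL Yf p0 ν 𝒴 (l + t • γ))
      ((𝒴.map fun y => kExp Yf p0 ν l y (fun x => wdot γ ν x)
        - pExp p0 ν l (fun x => wdot γ ν x)).sum) 0 := by
  obtain ⟨g1, hg1sum, hg1⟩ := hdom1
  obtain ⟨g2, hg2sum, hg2⟩ := hdom2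
  constructor
  · -- Part A
    have hG := pexp_term_deriv p0 ν hν l γ ε hε g2 hg2sum hg2 hpsum
    have hfun : (fun t : ℝ => Aaux Yf p0 ν 𝒴 (t • γ) l)
        = fun t => (𝒴.map fun y => 1 + t * kExp Yf p0 ν l y (fun x => wdot γ ν x)
            - (∑' x : X, pLL p0 ν l x * ∑ i, ((ν i x : ℝ) / (nuSharp ν x : ℝ)) *
                Real.exp (t * γ i * (nuSharp ν x : ℝ)))).sum := by
      funext t
      unfold Aaux
      congr 1
      apply Multiset.map_congr rfl
      intro y _
      rw [kExp_smul']
      simp only [pExp, Pi.smul_apply, smul_eq_mul]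
    rw [hfun]
    refine multiset_hasDerivAt 𝒴
      (fun y t => 1 + t * kExp Yf p0 ν l y (fun x => wdot γ ν x)
        - (∑' x : X, pLL p0 ν l x * ∑ i, ((ν i x : ℝ) / (nuSharp ν x : ℝ)) *
            Real.exp (t * γ i * (nuSharp ν x : ℝ))))
      (fun y => kExp Yf p0 ν l y (fun x => wdot γ ν x)
        - pExp p0 ν l (fun x => wdot γ ν x)) 0 (fun y _ => ?_)
    have h1 : HasDerivAt (fun t : ℝ => 1 + t * kExp Yf p0 ν l y (fun x => wdot γ ν x))
        (kExp Yf p0 ν l y (fun x => wdot γ ν x)) 0 := by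
      simpa using (hasDerivAt_mul_const (kExp Yf p0 ν l y (fun x => wdot γ ν x))).const_add
        (1 : ℝ) (x := (0:ℝ))
    exact h1.sub hG
  · -- Part B
    exact multiset_hasDerivAt 𝒴
      (fun y t => Real.log (pLLY Yf p0 ν (l + t • γ) y))
      (fun y => kExp Yf p0 ν l y (fun x => wdot γ ν x)
        - pExp p0 ν l (fun x => wdot γ ν x)) 0
      (fun y hy => logLik_term_deriv Yf p0 hp0 ν l γ ε hε hZt g1 hg1sum hg1 y (hpos y hy))
end

section
/- Under the stated setup, let Λ = {λ ∈ ℝ^n : Z_λ finite} and let (λ^{(k)}) be a sequence in Λ generated by iterative maximization, λ^{(k+1)} = M(λ^{(k)}) = γ̂^{(k)} + λ^{(k)} where γ̂^{(k)} globally maximizes γ ↦ A(γ, λ^{(k)}). Assume A and L are continuous in their arguments on Λ, and assume for every λ ∈ Λ and direction γ that d/dt A(tγ, λ)|_{t=0} and d/dt L(λ + tγ)|_{t=0} exist and are equal. Then every limit point λ̄ ∈ Λ of (λ^{(k)}) is a fixed point of M (γ = 0 maximizes A(·, λ̄)) and a critical point of L (all directional derivatives of L at λ̄ vanish). -/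
/- Common setup: log-linear models over proof trees (complete data X) and
   queries (incomplete data Y). -/

variable {X Y : Type*}

open Filter Real Topology

section imAux
variable {X Y : Type*}

lemma im_wdot_add {n : ℕ} (γ l : Fin n → ℝ) (ν : Fin n → X → ℕ) (x : X) :
    wdot (γ + l) ν x = wdot γ ν x + wdot l ν x := by
  simp [wdot, add_mul, Finset.sum_add_distrib]

lemma im_nuSharp_pos {n : ℕ} (ν : Fin n → X → ℕ) (hν : ∀ x, 1 ≤ nuSharp ν x) (x : X) :
    (0 : ℝ) < (nuSharp ν x : ℝ) := by exact_mod_cast hν x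

lemma im_nuBar_sum {n : ℕ} (ν : Fin n → X → ℕ) (hν : ∀ x, 1 ≤ nuSharp ν x) (x : X) :
    ∑ i, ((ν i x : ℝ) / (nuSharp ν x : ℝ)) = 1 := by
  rw [← Finset.sum_div, div_eq_one_iff_eq (im_nuSharp_pos ν hν x).ne']
  push_cast [nuSharp]
  rfl

lemma im_exp_wdot_le {n : ℕ} (ν : Fin n → X → ℕ) (hν : ∀ x, 1 ≤ nuSharp ν x)
    (γ : Fin n → ℝ) (x : X) :
    Real.exp (wdot γ ν x) ≤
      ∑ i, ((ν i x : ℝ) / (nuSharp ν x : ℝ)) * Real.exp (γ i * (nuSharp ν x : ℝ)) := by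
  have hs : (0 : ℝ) < (nuSharp ν x : ℝ) := im_nuSharp_pos ν hν x
  have h₀ : ∀ i ∈ Finset.univ, (0:ℝ) ≤ (ν i x : ℝ) / (nuSharp ν x : ℝ) := fun i _ => by positivity
  have hkey := convexOn_exp.map_sum_le (p := fun i => γ i * (nuSharp ν x : ℝ)) h₀
    (im_nuBar_sum ν hν x) (fun i _ => Set.mem_univ _)
  have harg : ∑ i, ((ν i x : ℝ) / (nuSharp ν x : ℝ)) • (γ i * (nuSharp ν x : ℝ)) = wdot γ ν x := by
    unfold wdot
    refine Finset.sum_congr rfl fun i _ => ?_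
    rw [smul_eq_mul]
    field_simp
  rw [harg] at hkey
  simpa using hkey

lemma im_Zpart_nonneg (p0 : X → ℝ) (hp0 : ∀ x, 0 < p0 x) {n : ℕ} (ν : Fin n → X → ℕ)
    (l : Fin n → ℝ) : 0 ≤ Zpart p0 ν l :=
  tsum_nonneg fun x => mul_nonneg (Real.exp_pos _).le (hp0 x).le

lemma im_Zpart_pos (p0 : X → ℝ) (hp0 : ∀ x, 0 < p0 x) {n : ℕ} (ν : Fin n → X → ℕ)
    (l : Fin n → ℝ) (hl : Summable fun x : X => Real.exp (wdot l ν x) * p0 x)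
    (hX : Nonempty X) : 0 < Zpart p0 ν l := by
  exact Summable.tsum_pos hl (fun x => mul_nonneg (Real.exp_pos _).le (hp0 x).le) hX.some
    (mul_pos (Real.exp_pos _) (hp0 _))

lemma im_pLL_nonneg (p0 : X → ℝ) (hp0 : ∀ x, 0 < p0 x) {n : ℕ} (ν : Fin n → X → ℕ)
    (l : Fin n → ℝ) (x : X) : 0 ≤ pLL p0 ν l x := by
  have hZ : 0 ≤ Zpart p0 ν l := im_Zpart_nonneg p0 hp0 ν l
  unfold pLL
  exact mul_nonneg (mul_nonneg (inv_nonneg.mpr hZ) (Real.exp_pos _).le) (hp0 x).le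

lemma im_pLL_pos (p0 : X → ℝ) (hp0 : ∀ x, 0 < p0 x) {n : ℕ} (ν : Fin n → X → ℕ)
    (l : Fin n → ℝ) (hl : Summable fun x : X => Real.exp (wdot l ν x) * p0 x)
    (hX : Nonempty X) (x : X) : 0 < pLL p0 ν l x := by
  have hZ := im_Zpart_pos p0 hp0 ν l hl hX
  unfold pLL
  exact mul_pos (mul_pos (inv_pos.mpr hZ) (Real.exp_pos _)) (hp0 x)

lemma im_summable_pLL (p0 : X → ℝ) {n : ℕ} (ν : Fin n → X → ℕ) (l : Fin n → ℝ)
    (hl : Summable fun x : X => Real.exp (wdot l ν x) * p0 x) :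
    Summable (pLL p0 ν l) := by
  refine Summable.congr (hl.mul_left (Zpart p0 ν l)⁻¹) fun x => ?_
  simp [pLL, mul_assoc]

lemma im_tsum_pLL (p0 : X → ℝ) (hp0 : ∀ x, 0 < p0 x) {n : ℕ} (ν : Fin n → X → ℕ)
    (l : Fin n → ℝ) (hl : Summable fun x : X => Real.exp (wdot l ν x) * p0 x)
    (hX : Nonempty X) : ∑' x : X, pLL p0 ν l x = 1 := by
  have hZ := im_Zpart_pos p0 hp0 ν l hl hX
  unfold pLL
  simp only [mul_assoc]
  rw [tsum_mul_left]
  exact inv_mul_cancel₀ hZ.ne'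

lemma im_pLL_mul_exp (p0 : X → ℝ) {n : ℕ} (ν : Fin n → X → ℕ) (l γ : Fin n → ℝ) (x : X) :
    pLL p0 ν l x * Real.exp (wdot γ ν x)
      = (Zpart p0 ν l)⁻¹ * (Real.exp (wdot (γ + l) ν x) * p0 x) := by
  rw [im_wdot_add, Real.exp_add]
  unfold pLL
  ring

lemma im_summable_pLL_exp (p0 : X → ℝ) {n : ℕ} (ν : Fin n → X → ℕ) (l γ : Fin n → ℝ)
    (hl' : Summable fun x : X => Real.exp (wdot (γ + l) ν x) * p0 x) :
    Summable fun x : X => pLL p0 ν l x * Real.exp (wdot γ ν x) := by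
  refine Summable.congr (hl'.mul_left (Zpart p0 ν l)⁻¹) fun x => ?_
  exact (im_pLL_mul_exp p0 ν l γ x).symm

/-- The key per-`y` bound on the conditional expectation. -/
lemma im_kExp_le (Yf : X → Y) (p0 : X → ℝ) (hp0 : ∀ x, 0 < p0 x) {n : ℕ}
    (ν : Fin n → X → ℕ) (l γ : Fin n → ℝ)
    (hl : Summable fun x : X => Real.exp (wdot l ν x) * p0 x)
    (hl' : Summable fun x : X => Real.exp (wdot (γ + l) ν x) * p0 x)
    (hX : Nonempty X) (y : Y)
    (hpy : 0 < pLLY Yf p0 ν l y) (hpy' : 0 < pLLY Yf p0 ν (γ + l) y)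
    (hk : Summable fun x : {x : X // Yf x = y} =>
      (pLL p0 ν l x.1 / pLLY Yf p0 ν l y) * wdot γ ν x.1) :
    kExp Yf p0 ν l y (fun x => wdot γ ν x) ≤
      Real.log (Zpart p0 ν (γ + l)) + Real.log (pLLY Yf p0 ν (γ + l) y)
        - Real.log (Zpart p0 ν l) - Real.log (pLLY Yf p0 ν l y) := by
  have hZ : 0 < Zpart p0 ν l := im_Zpart_pos p0 hp0 ν l hl hX
  have hZ' : 0 < Zpart p0 ν (γ + l) := im_Zpart_pos p0 hp0 ν (γ + l) hl' hX
  set Z := Zpart p0 ν l with hZdef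
  set Z' := Zpart p0 ν (γ + l) with hZ'def
  set py := pLLY Yf p0 ν l y with hpydef
  set py' := pLLY Yf p0 ν (γ + l) y with hpy'def
  set c : ℝ := Z' * py' / (Z * py) with hcdef
  have hc : 0 < c := div_pos (mul_pos hZ' hpy') (mul_pos hZ hpy)
  -- summabilities over the fiber
  have h1 : Summable fun x : {x : X // Yf x = y} => pLL p0 ν l x.1 :=
    (im_summable_pLL p0 ν l hl).subtype {x | Yf x = y}
  have h1sum : ∑' x : {x : X // Yf x = y}, pLL p0 ν l x.1 = py := rfl
  have h3 : Summable fun x : {x : X // Yf x = y} => pLL p0 ν l x.1 * Real.exp (wdot γ ν x.1) :=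
    (im_summable_pLL_exp p0 ν l γ hl').subtype {x | Yf x = y}
  have hfiber : ∑' x : {x : X // Yf x = y}, Real.exp (wdot (γ + l) ν x.1) * p0 x.1
      = Z' * py' := by
    have haux : py' = Z'⁻¹ * ∑' x : {x : X // Yf x = y}, Real.exp (wdot (γ + l) ν x.1) * p0 x.1 := by
      rw [hpy'def]
      unfold pLLY pLL
      simp only [mul_assoc]
      rw [tsum_mul_left]
    rw [haux, ← mul_assoc, mul_inv_cancel₀ hZ'.ne', one_mul]
  have h3sum : ∑' x : {x : X // Yf x = y}, pLL p0 ν l x.1 * Real.exp (wdot γ ν x.1)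
      = Z⁻¹ * (Z' * py') := by
    rw [tsum_congr (fun x : {x : X // Yf x = y} => im_pLL_mul_exp p0 ν l γ x.1),
      tsum_mul_left, hfiber]
  -- pointwise inequality
  have hpt : ∀ x : {x : X // Yf x = y},
      (pLL p0 ν l x.1 / py) * wdot γ ν x.1 ≤
        pLL p0 ν l x.1 * (Real.log c / py)
          + (pLL p0 ν l x.1 * Real.exp (wdot γ ν x.1)) * (py * c)⁻¹
          - pLL p0 ν l x.1 * (1 / py) := by
    intro x
    set t := wdot γ ν x.1 with htdef
    have hexp : Real.exp (t - Real.log c) = Real.exp t / c := by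
      rw [Real.exp_sub, Real.exp_log hc]
    have ht : t ≤ Real.log c + Real.exp t / c - 1 := by
      have h := Real.add_one_le_exp (t - Real.log c)
      rw [hexp] at h
      linarith
    have hpnn : 0 ≤ pLL p0 ν l x.1 / py :=
      div_nonneg (im_pLL_nonneg p0 hp0 ν l x.1) hpy.le
    have h2 := mul_le_mul_of_nonneg_left ht hpnn
    refine h2.trans_eq ?_
    field_simp [hpy.ne', hc.ne']
  have hRs : Summable fun x : {x : X // Yf x = y} =>
      pLL p0 ν l x.1 * (Real.log c / py)
        + (pLL p0 ν l x.1 * Real.exp (wdot γ ν x.1)) * (py * c)⁻¹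
        - pLL p0 ν l x.1 * (1 / py) :=
    ((h1.mul_right _).add (h3.mul_right _)).sub (h1.mul_right _)
  have hle := Summable.tsum_le_tsum hpt hk hRs
  have hRval : (∑' x : {x : X // Yf x = y},
      (pLL p0 ν l x.1 * (Real.log c / py)
        + (pLL p0 ν l x.1 * Real.exp (wdot γ ν x.1)) * (py * c)⁻¹
        - pLL p0 ν l x.1 * (1 / py))) = Real.log c := by
    rw [Summable.tsum_sub ((h1.mul_right _).add (h3.mul_right _)) (h1.mul_right _),
      Summable.tsum_add (h1.mul_right _) (h3.mul_right _), tsum_mul_right, tsum_mul_right,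
      tsum_mul_right, h1sum, h3sum]
    have hcval : Z⁻¹ * (Z' * py') = c * py := by
      rw [hcdef]
      field_simp
    rw [hcval]
    field_simp [hpy.ne', hc.ne']
    ring
  have hlogc : Real.log c = Real.log Z' + Real.log py' - Real.log Z - Real.log py := by
    rw [hcdef, Real.log_div (mul_pos hZ' hpy').ne' (mul_pos hZ hpy).ne',
      Real.log_mul hZ'.ne' hpy'.ne', Real.log_mul hZ.ne' hpy.ne']
    ring
  have : kExp Yf p0 ν l y (fun x => wdot γ ν x) ≤ Real.log c := by
    rw [← hRval]
    exact hle
  rw [hlogc] at this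
  exact this

/-- The key bound on the log-ratio of partition functions. -/
lemma im_logZ_le (p0 : X → ℝ) (hp0 : ∀ x, 0 < p0 x) {n : ℕ} (ν : Fin n → X → ℕ)
    (hν : ∀ x, 1 ≤ nuSharp ν x) (l γ : Fin n → ℝ)
    (hl : Summable fun x : X => Real.exp (wdot l ν x) * p0 x)
    (hl' : Summable fun x : X => Real.exp (wdot (γ + l) ν x) * p0 x)
    (hX : Nonempty X)
    (hp : Summable fun x : X => pLL p0 ν l x *
      ∑ i, ((ν i x : ℝ) / (nuSharp ν x : ℝ)) * Real.exp (γ i * (nuSharp ν x : ℝ))) :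
    Real.log (Zpart p0 ν (γ + l)) - Real.log (Zpart p0 ν l) ≤
      pExp p0 ν l (fun x =>
        ∑ i, ((ν i x : ℝ) / (nuSharp ν x : ℝ)) * Real.exp (γ i * (nuSharp ν x : ℝ))) - 1 := by
  have hZ : 0 < Zpart p0 ν l := im_Zpart_pos p0 hp0 ν l hl hX
  have hZ' : 0 < Zpart p0 ν (γ + l) := im_Zpart_pos p0 hp0 ν (γ + l) hl' hX
  have hsum : ∑' x : X, pLL p0 ν l x * Real.exp (wdot γ ν x)
      = Zpart p0 ν (γ + l) / Zpart p0 ν l := by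
    rw [tsum_congr (fun x => im_pLL_mul_exp p0 ν l γ x), tsum_mul_left]
    rw [inv_mul_eq_div]
    rfl
  have hmono : Zpart p0 ν (γ + l) / Zpart p0 ν l ≤ pExp p0 ν l (fun x =>
      ∑ i, ((ν i x : ℝ) / (nuSharp ν x : ℝ)) * Real.exp (γ i * (nuSharp ν x : ℝ))) := by
    rw [← hsum]
    unfold pExp
    refine Summable.tsum_le_tsum (fun x => ?_) (im_summable_pLL_exp p0 ν l γ hl') hp
    exact mul_le_mul_of_nonneg_left (im_exp_wdot_le ν hν γ x) (im_pLL_nonneg p0 hp0 ν l x)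
  have hlog : Real.log (Zpart p0 ν (γ + l) / Zpart p0 ν l)
      ≤ Zpart p0 ν (γ + l) / Zpart p0 ν l - 1 :=
    Real.log_le_sub_one_of_pos (div_pos hZ' hZ)
  rw [← Real.log_div hZ'.ne' hZ.ne']
  linarith

/-- The fundamental inequality: `A(γ,λ) ≤ L(λ+γ) − L(λ)`. -/
lemma im_key (Yf : X → Y) (p0 : X → ℝ) (hp0 : ∀ x, 0 < p0 x) {n : ℕ}
    (ν : Fin n → X → ℕ) (hν : ∀ x, 1 ≤ nuSharp ν x) (𝒴 : Multiset Y)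
    (hX : Nonempty X) (l γ : Fin n → ℝ)
    (hl : Summable fun x : X => Real.exp (wdot l ν x) * p0 x)
    (hl' : Summable fun x : X => Real.exp (wdot (γ + l) ν x) * p0 x)
    (hposl : ∀ y ∈ 𝒴, 0 < pLLY Yf p0 ν l y)
    (hposl' : ∀ y ∈ 𝒴, 0 < pLLY Yf p0 ν (γ + l) y)
    (hk : ∀ y ∈ 𝒴, Summable fun x : {x : X // Yf x = y} =>
      (pLL p0 ν l x.1 / pLLY Yf p0 ν l y) * wdot γ ν x.1)
    (hp : Summable fun x : X => pLL p0 ν l x *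
      ∑ i, ((ν i x : ℝ) / (nuSharp ν x : ℝ)) * Real.exp (γ i * (nuSharp ν x : ℝ))) :
    Aaux Yf p0 ν 𝒴 γ l ≤ LL Yf p0 ν 𝒴 (γ + l) - LL Yf p0 ν 𝒴 l := by
  unfold Aaux LL
  rw [← Multiset.sum_map_sub]
  refine Multiset.sum_map_le_sum_map _ _ fun y hy => ?_
  have h1 := im_kExp_le Yf p0 hp0 ν l γ hl hl' hX y (hposl y hy) (hposl' y hy) (hk y hy)
  have h2 := im_logZ_le p0 hp0 ν hν l γ hl hl' hX hp
  linarith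

/-- `A(0,λ) = 0`. -/
lemma im_A_zero (Yf : X → Y) (p0 : X → ℝ) (hp0 : ∀ x, 0 < p0 x) {n : ℕ}
    (ν : Fin n → X → ℕ) (hν : ∀ x, 1 ≤ nuSharp ν x) (𝒴 : Multiset Y)
    (hX : Nonempty X) (l : Fin n → ℝ)
    (hl : Summable fun x : X => Real.exp (wdot l ν x) * p0 x) :
    Aaux Yf p0 ν 𝒴 (0 : Fin n → ℝ) l = 0 := by
  unfold Aaux
  have hterm : ∀ y ∈ 𝒴,
      (1 + kExp Yf p0 ν l y (fun x => wdot (0 : Fin n → ℝ) ν x)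
        - pExp p0 ν l (fun x =>
            ∑ i, ((ν i x : ℝ) / (nuSharp ν x : ℝ))
              * Real.exp ((0 : Fin n → ℝ) i * (nuSharp ν x : ℝ))))
        = (fun _ : Y => (0 : ℝ)) y := by
    intro y _
    have hk0 : kExp Yf p0 ν l y (fun x => wdot (0 : Fin n → ℝ) ν x) = 0 := by
      unfold kExp
      simp [wdot]
    have hp1 : pExp p0 ν l (fun x =>
        ∑ i, ((ν i x : ℝ) / (nuSharp ν x : ℝ))
          * Real.exp ((0 : Fin n → ℝ) i * (nuSharp ν x : ℝ))) = 1 := by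
      have hfx : ∀ x : X, (∑ i, ((ν i x : ℝ) / (nuSharp ν x : ℝ))
          * Real.exp ((0 : Fin n → ℝ) i * (nuSharp ν x : ℝ))) = 1 := fun x => by
        simp only [Pi.zero_apply, zero_mul, Real.exp_zero, mul_one]
        exact im_nuBar_sum ν hν x
      have hfun : (fun x : X => pLL p0 ν l x *
          ∑ i, ((ν i x : ℝ) / (nuSharp ν x : ℝ))
            * Real.exp ((0 : Fin n → ℝ) i * (nuSharp ν x : ℝ))) = pLL p0 ν l :=
        funext fun x => by rw [hfx x, mul_one]
      unfold pExp
      rw [hfun]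
      exact im_tsum_pLL p0 hp0 ν l hl hX
    rw [hk0, hp1]
    ring
  rw [Multiset.map_congr rfl hterm]
  exact Multiset.sum_map_zero

end imAux

set_option maxHeartbeats 1600000 in
/-- Theorem 6 (Convergence): every limit point of an IM sequence is a fixed
point of `M` and a critical point of `L`. -/
theorem im_limit_points_are_critical
    {X Y : Type*} [Countable X] (Yf : X → Y)
    (p0 : X → ℝ) (hp0 : ∀ x, 0 < p0 x) (hp0sum : ∑' x : X, p0 x = 1)
    {n : ℕ} (ν : Fin n → X → ℕ) (hν : ∀ x, 1 ≤ nuSharp ν x)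
    (𝒴 : Multiset Y)
    (hpos : ∀ l : Fin n → ℝ, (Summable fun x : X => Real.exp (wdot l ν x) * p0 x) →
      ∀ y ∈ 𝒴, 0 < pLLY Yf p0 ν l y)
    (hksum : ∀ l γ : Fin n → ℝ, ∀ y ∈ 𝒴, Summable fun x : {x : X // Yf x = y} =>
      (pLL p0 ν l x.1 / pLLY Yf p0 ν l y) * wdot γ ν x.1)
    (hpsum : ∀ l γ : Fin n → ℝ, Summable fun x : X => pLL p0 ν l x *
      ∑ i, ((ν i x : ℝ) / (nuSharp ν x : ℝ)) * Real.exp (γ i * (nuSharp ν x : ℝ)))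
    (seq γh : ℕ → Fin n → ℝ)
    (hseqZ : ∀ k : ℕ, Summable fun x : X => Real.exp (wdot (seq k) ν x) * p0 x)
    (hstep : ∀ k : ℕ, seq (k + 1) = γh k + seq k)
    (hmax : ∀ k : ℕ, ∀ γ : Fin n → ℝ,
      Aaux Yf p0 ν 𝒴 γ (seq k) ≤ Aaux Yf p0 ν 𝒴 (γh k) (seq k))
    (hAcont : ContinuousOn
      (fun p : (Fin n → ℝ) × (Fin n → ℝ) => Aaux Yf p0 ν 𝒴 p.1 p.2)
      (Set.univ ×ˢ {l : Fin n → ℝ | Summable fun x : X => Real.exp (wdot l ν x) * p0 x}))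
    (hLcont : ContinuousOn (LL Yf p0 ν 𝒴)
      {l : Fin n → ℝ | Summable fun x : X => Real.exp (wdot l ν x) * p0 x})
    (hderiv : ∀ l : Fin n → ℝ, (Summable fun x : X => Real.exp (wdot l ν x) * p0 x) →
      ∀ γ : Fin n → ℝ, ∃ D : ℝ,
        HasDerivAt (fun t : ℝ => Aaux Yf p0 ν 𝒴 (t • γ) l) D 0 ∧
        HasDerivAt (fun t : ℝ => LL Yf p0 ν 𝒴 (l + t • γ)) D 0)
    (lbar : Fin n → ℝ)
    (hZbar : Summable fun x : X => Real.exp (wdot lbar ν x) * p0 x)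
    (φ : ℕ → ℕ) (hφ : StrictMono φ)
    (hlim : Filter.Tendsto (fun k : ℕ => seq (φ k)) Filter.atTop (nhds lbar)) :
    (∀ γ : Fin n → ℝ, Aaux Yf p0 ν 𝒴 γ lbar ≤ Aaux Yf p0 ν 𝒴 (0 : Fin n → ℝ) lbar) ∧
    (∀ γ : Fin n → ℝ, HasDerivAt (fun t : ℝ => LL Yf p0 ν 𝒴 (lbar + t • γ)) 0 0) := by
  have hA : ∀ γ : Fin n → ℝ, Aaux Yf p0 ν 𝒴 γ lbar ≤ Aaux Yf p0 ν 𝒴 (0 : Fin n → ℝ) lbar := by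
    by_cases h𝒴 : 𝒴 = 0
    · intro γ
      subst h𝒴
      simp [Aaux]
    · obtain ⟨y0, hy0⟩ := Multiset.exists_mem_of_ne_zero h𝒴
      -- X is nonempty
      have hX : Nonempty X := by
        by_contra h
        have hE : IsEmpty X := not_nonempty_iff.mp h
        have h2 := hpos lbar hZbar y0 hy0
        have : pLLY Yf p0 ν lbar y0 = 0 := by
          unfold pLLY
          exact tsum_empty
        rw [this] at h2
        exact lt_irrefl 0 h2
      -- summability at successor steps
      have hZsucc : ∀ k : ℕ,
          Summable fun x : X => Real.exp (wdot (γh k + seq k) ν x) * p0 x := fun k => by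
        rw [← hstep k]; exact hseqZ (k + 1)
      -- key inequality along the sequence
      have hkeyseq : ∀ k : ℕ, Aaux Yf p0 ν 𝒴 (γh k) (seq k) ≤
          LL Yf p0 ν 𝒴 (seq (k + 1)) - LL Yf p0 ν 𝒴 (seq k) := fun k => by
        have := im_key Yf p0 hp0 ν hν 𝒴 hX (seq k) (γh k) (hseqZ k) (hZsucc k)
          (hpos (seq k) (hseqZ k)) (hpos (γh k + seq k) (hZsucc k))
          (hksum (seq k) (γh k)) (hpsum (seq k) (γh k))
        rw [← hstep k] at this
        exact this
      -- monotonicity of the likelihood along the sequence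
      have hmono : Monotone fun k : ℕ => LL Yf p0 ν 𝒴 (seq k) := by
        refine monotone_nat_of_le_succ fun k => ?_
        have h0 : (0 : ℝ) ≤ Aaux Yf p0 ν 𝒴 (γh k) (seq k) := by
          have := hmax k 0
          rwa [im_A_zero Yf p0 hp0 ν hν 𝒴 hX (seq k) (hseqZ k)] at this
        have := hkeyseq k
        linarith
      -- convergence of the likelihood along the subsequence
      have hLbar : Filter.Tendsto (fun k : ℕ => LL Yf p0 ν 𝒴 (seq (φ k)))
          Filter.atTop (nhds (LL Yf p0 ν 𝒴 lbar)) := by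
        have hc := (hLcont lbar hZbar).tendsto
        exact hc.comp (tendsto_nhdsWithin_of_tendsto_nhds_of_eventually_within _ hlim
          (Filter.Eventually.of_forall fun k => hseqZ (φ k)))
      have hφ1 : ∀ k : ℕ, φ k + 1 ≤ φ (k + 1) := fun k => hφ (Nat.lt_succ_self k)
      have hshift : Filter.Tendsto (fun k : ℕ => LL Yf p0 ν 𝒴 (seq (φ (k + 1))))
          Filter.atTop (nhds (LL Yf p0 ν 𝒴 lbar)) :=
        hLbar.comp (Filter.tendsto_add_atTop_nat 1)
      have hmid : Filter.Tendsto (fun k : ℕ => LL Yf p0 ν 𝒴 (seq (φ k + 1)))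
          Filter.atTop (nhds (LL Yf p0 ν 𝒴 lbar)) :=
        tendsto_of_tendsto_of_tendsto_of_le_of_le hLbar hshift
          (fun k => hmono (Nat.le_succ (φ k))) (fun k => hmono (hφ1 k))
      have hD : Filter.Tendsto
          (fun k : ℕ => LL Yf p0 ν 𝒴 (seq (φ k + 1)) - LL Yf p0 ν 𝒴 (seq (φ k)))
          Filter.atTop (nhds 0) := by
        simpa using hmid.sub hLbar
      intro γ
      have hAk : ∀ k : ℕ, Aaux Yf p0 ν 𝒴 γ (seq (φ k)) ≤
          LL Yf p0 ν 𝒴 (seq (φ k + 1)) - LL Yf p0 ν 𝒴 (seq (φ k)) := fun k =>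
        le_trans (hmax (φ k) γ) (hkeyseq (φ k))
      have hAtend : Filter.Tendsto (fun k : ℕ => Aaux Yf p0 ν 𝒴 γ (seq (φ k)))
          Filter.atTop (nhds (Aaux Yf p0 ν 𝒴 γ lbar)) := by
        have hmem : (γ, lbar) ∈ (Set.univ ×ˢ
            {l : Fin n → ℝ | Summable fun x : X => Real.exp (wdot l ν x) * p0 x}) :=
          Set.mk_mem_prod (Set.mem_univ _) hZbar
        have hc := (hAcont (γ, lbar) hmem).tendsto
        have hpair0 : Filter.Tendsto (fun k : ℕ => ((γ, seq (φ k)) :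
            (Fin n → ℝ) × (Fin n → ℝ))) Filter.atTop (nhds (γ, lbar)) :=
          Filter.Tendsto.prodMk_nhds tendsto_const_nhds hlim
        have hmem' : ∀ k : ℕ, ((γ, seq (φ k)) : (Fin n → ℝ) × (Fin n → ℝ)) ∈ (Set.univ ×ˢ
            {l : Fin n → ℝ | Summable fun x : X => Real.exp (wdot l ν x) * p0 x}) :=
          fun k => Set.mk_mem_prod (Set.mem_univ _) (hseqZ (φ k))
        have hpair := tendsto_nhdsWithin_of_tendsto_nhds_of_eventually_within _ hpair0
          (Filter.Eventually.of_forall hmem')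
        simpa [Function.comp_def] using hc.comp hpair
      have hfinal : Aaux Yf p0 ν 𝒴 γ lbar ≤ 0 :=
        le_of_tendsto_of_tendsto hAtend hD (Filter.Eventually.of_forall hAk)
      rw [im_A_zero Yf p0 hp0 ν hν 𝒴 hX lbar hZbar]
      exact hfinal
  refine ⟨hA, fun γ => ?_⟩
  obtain ⟨D, hAd, hLd⟩ := hderiv lbar hZbar γ
  have hlocmax : IsLocalMax (fun t : ℝ => Aaux Yf p0 ν 𝒴 (t • γ) lbar) 0 := by
    refine Filter.Eventually.of_forall fun t => ?_
    have := hA (t • γ)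
    simpa [zero_smul] using this
  have hD0 : D = 0 := hlocmax.hasDerivAt_eq_zero hAd
  rw [hD0] at hLd
  exact hLd
end
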